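/- arXiv:1103.1648 — 4 statements merged into one kernel-verified Lean document; each statement's English description precedes it below -/
import Mathlib

section
/- Let (G,Y) be a harmonic group action on a finite graph Y with connected quotient G\Y. If the quotient morphism φ_G : Y → G\Y is degenerate at some vertex, then G\Y is the point graph (a single vertex with no edges). -/
open MulAction

/-- A finite multigraph without loop edges: an edge set with an incidence map
to unordered pairs of vertices, no edge being a loop. -/
structure Multigraph (V : Type*) (E : Type*) where
  ends : E → Sym2 V
  loopless : ∀ e, ¬ (ends e).IsDiag

namespace Multigraph

variable {V E : Type*}

/-- two vertices are joined by an edge -/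
def Step (Γ : Multigraph V E) (a b : V) : Prop := ∃ e, Γ.ends e = s(a, b)

/-- graph-theoretic reachability (path-connectivity) -/
def Reach (Γ : Multigraph V E) : V → V → Prop := Relation.ReflTransGen Γ.Step

/-- connectivity of a graph -/
def Connected (Γ : Multigraph V E) : Prop := ∀ a b : V, Γ.Reach a b

/-- reachability using only edges in a subset `T` -/
def ReachIn (Γ : Multigraph V E) (T : Set E) : V → V → Prop :=
  Relation.ReflTransGen (fun a b => ∃ e ∈ T, Γ.ends e = s(a, b))

/-- `T` is a spanning tree: it connects all vertices and has `|V| - 1` edges -/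
def IsSpanningTree (Γ : Multigraph V E) (T : Set E) : Prop :=
  (∀ a b : V, Γ.ReachIn T a b) ∧ Nat.card T + 1 = Nat.card V

end Multigraph

open Multigraph

theorem Sym2.isDiag_map_iff' {α β : Type*} {f : α → β} (hf : Function.Injective f)
    (z : Sym2 α) : (z.map f).IsDiag ↔ z.IsDiag := by
  induction z using Sym2.ind with
  | _ a b => simp [hf.eq_iff]

/-- A morphism of graphs: vertices map to vertices; an edge maps either to an
edge whose ends are the images of its ends, or (if the two ends have the same
image) it is vertical, collapsing to that image vertex. -/
structure GraphHom {VY EY VX EX : Type*} (ΓY : Multigraph VY EY)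
    (ΓX : Multigraph VX EX) where
  fV : VY → VX
  fE : EY → EX ⊕ VX
  map_edge : ∀ e eX, fE e = Sum.inl eX → ΓX.ends eX = (ΓY.ends e).map fV
  map_vert : ∀ e v, fE e = Sum.inr v → (ΓY.ends e).map fV = Sym2.diag v

/-- An isomorphism of multigraphs: bijections on vertices and edges preserving incidence. -/
structure GraphIso {V1 E1 V2 E2 : Type*} (Γ1 : Multigraph V1 E1)
    (Γ2 : Multigraph V2 E2) where
  vEquiv : V1 ≃ V2
  eEquiv : E1 ≃ E2
  map_ends : ∀ e, Γ2.ends (eEquiv e) = (Γ1.ends e).map vEquiv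

/-- the morphism `φ` is harmonic: for every vertex `y`, the number of edges at `y`
lying over `e'` is independent of the edge `e'` incident to `φ(y)`. -/
def GraphHomHarmonic {VY EY VX EX : Type*} {ΓY : Multigraph VY EY}
    {ΓX : Multigraph VX EX} (f : GraphHom ΓY ΓX) : Prop :=
  ∀ (y : VY) (e1 e2 : EX), f.fV y ∈ ΓX.ends e1 → f.fV y ∈ ΓX.ends e2 →
    Nat.card {e : EY // y ∈ ΓY.ends e ∧ f.fE e = Sum.inl e1} =
    Nat.card {e : EY // y ∈ ΓY.ends e ∧ f.fE e = Sum.inl e2}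

/-- the morphism `φ` is degenerate at `y`: the whole neighborhood `y(1)` is
collapsed to the vertex `φ(y)`. -/
def DegenerateAt {VY EY VX EX : Type*} {ΓY : Multigraph VY EY}
    {ΓX : Multigraph VX EX} (f : GraphHom ΓY ΓX) (y : VY) : Prop :=
  ∀ e : EY, y ∈ ΓY.ends e → f.fE e = Sum.inr (f.fV y)

section GroupAction

variable (G : Type*) [Group G] {V E : Type*} [MulAction G V] [MulAction G E]

/-- the `G`-actions on vertices and edges are compatible with the incidence structure -/
def ActsOn (Γ : Multigraph V E) : Prop :=
  ∀ (g : G) (e : E), Γ.ends (g • e) = (Γ.ends e).map (g • ·)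

/-- the action is faithful: the stabilizer of each connected component acts
faithfully on that component -/
def FaithfulOnComponents (Γ : Multigraph V E) : Prop :=
  ∀ (v : V) (g : G), Γ.Reach v (g • v) →
    (∀ w, Γ.Reach v w → g • w = w) →
    (∀ e : E, (∀ u ∈ Γ.ends e, Γ.Reach v u) → g • e = e) → g = 1

/-- harmonicity of the quotient morphism `φ_H : Y → H\Y`, expressed intrinsically:
for every vertex `y` and all non-vertical edge-orbits `H•e₁`, `H•e₂` incident to
the image vertex `H•y`, the numbers of edges at `y` lying over them agree. -/
def QuotHarmonic (Γ : Multigraph V E) (H : Subgroup G) : Prop :=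
  ∀ (y : V) (e1 e2 : E),
    ¬ ((Γ.ends e1).map (Quotient.mk (orbitRel H V))).IsDiag →
    ¬ ((Γ.ends e2).map (Quotient.mk (orbitRel H V))).IsDiag →
    (∃ h : H, y ∈ Γ.ends (h • e1)) → (∃ h : H, y ∈ Γ.ends (h • e2)) →
    Nat.card {e : E // e ∈ orbit H e1 ∧ y ∈ Γ.ends e} =
    Nat.card {e : E // e ∈ orbit H e2 ∧ y ∈ Γ.ends e}

/-- `(G,Y)` is a harmonic group action: for every subgroup `H ≤ G` the quotient
morphism `Y → H\Y` is harmonic. -/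
def HarmonicAction (Γ : Multigraph V E) : Prop :=
  ∀ H : Subgroup G, QuotHarmonic G Γ H

/-- the criterion: each vertex stabilizer acts freely on the incident edges -/
def HarmonicCrit (Γ : Multigraph V E) : Prop :=
  ∀ (g : G) (v : V) (e : E), g • v = v → v ∈ Γ.ends e → g • e = e → g = 1

end GroupAction

/-- A harmonic `G`-cover of `X`: a harmonic group action `(G,Y)` with `Y`
connected, together with a morphism `f : Y → X` realizing an isomorphism
`G\Y ≅ X`. -/
structure IsHarmonicGCover (G : Type*) [Group G] {VY EY VX EX : Type*}
    [MulAction G VY] [MulAction G EY] (ΓY : Multigraph VY EY)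
    (ΓX : Multigraph VX EX) (f : GraphHom ΓY ΓX) : Prop where
  compat : ActsOn G ΓY
  harmonic : HarmonicCrit G ΓY
  connY : ΓY.Connected
  fV_equivariant : ∀ (g : G) (v : VY), f.fV (g • v) = f.fV v
  fE_equivariant : ∀ (g : G) (e : EY), f.fE (g • e) = f.fE e
  fV_orbit : ∀ v w : VY, f.fV v = f.fV w → w ∈ orbit G v
  fE_orbit : ∀ (e e' : EY) (eX : EX), f.fE e = Sum.inl eX → f.fE e' = Sum.inl eX →
    e' ∈ orbit G e
  fV_surj : Function.Surjective f.fV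
  fE_surj : ∀ eX : EX, ∃ e : EY, f.fE e = Sum.inl eX

/-- The decomposition group at `w`: elements of `G` stabilizing the connected
component of `w` inside the fiber over `f(w)`. -/
def Decomp (G : Type*) [Group G] {VY EY VX EX : Type*} [MulAction G VY]
    (ΓY : Multigraph VY EY) {ΓX : Multigraph VX EX} (f : GraphHom ΓY ΓX)
    (w : VY) : Set G :=
  {g : G | Relation.ReflTransGen
    (fun a b => f.fV a = f.fV w ∧ f.fV b = f.fV w ∧ ∃ e, ΓY.ends e = s(a, b))
    w (g • w)}

section Cayley

variable {G : Type*} [Group G] {ι : Type*}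

/-- identification of the two directed copies of a non-involution edge in a Cayley graph -/
def cayRel (s : ι → G) (inv : ι → ι) : G × ι → G × ι → Prop :=
  fun p q => s p.2 ≠ (s p.2)⁻¹ ∧ q = (p.1 * s p.2, inv p.2)

/-- the edge set of the Cayley graph `Cay(G,S)` -/
def CayE (s : ι → G) (inv : ι → ι) : Type _ := Quot (cayRel s inv)

/-- the Cayley graph `Cay(G,S)` of a group `G` with respect to a symmetric multiset
`S`, presented as an indexed family `s : ι → G` together with an inversion pairing
`inv` on the index set.  For each `g` and `i` there is an edge from `g` to `g * s i`;
the edges for `(g, i)` and `(g * s i, inv i)` are identified when `s i` is not an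
involution; involutions yield doubled edges. -/
def Cay (s : ι → G) (inv : ι → ι) (hinv : ∀ i, s (inv i) = (s i)⁻¹)
    (hne : ∀ i, s i ≠ 1) : Multigraph G (CayE s inv) where
  ends := Quot.lift (fun p => s(p.1, p.1 * s p.2)) (by
    rintro p q ⟨-, rfl⟩
    dsimp only
    rw [hinv, mul_inv_cancel_right]
    exact Sym2.eq_swap)
  loopless := by
    intro e
    induction e using Quot.ind with
    | _ p =>
      show ¬ (s(p.1, p.1 * s p.2)).IsDiag
      simp only [Sym2.mk_isDiag_iff]
      intro h
      exact hne p.2 (by rwa [left_eq_mul] at h)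

instance instCayAction (s : ι → G) (inv : ι → ι) : MulAction G (CayE s inv) where
  smul g := Quot.map (fun p => (g * p.1, p.2))
    (by rintro p q ⟨hi, rfl⟩; exact ⟨hi, by simp [mul_assoc]⟩)
  one_smul e := by
    induction e using Quot.ind with
    | _ p =>
      show Quot.mk _ ((1 : G) * p.1, p.2) = Quot.mk _ p
      rw [one_mul]
  mul_smul g h e := by
    induction e using Quot.ind with
    | _ p =>
      show Quot.mk _ (g * h * p.1, p.2) = Quot.mk _ (g * (h * p.1), p.2)
      rw [mul_assoc]

end Cayley

/-- If `(G,Y)` is a harmonic group action with connected quotient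
`G\Y` and the quotient morphism is degenerate at some vertex `y`, then the quotient
`G\Y` is the point graph: all vertices of `Y` lie in a single `G`-orbit (and hence
the quotient, having its loops removed, has a single vertex and no edges). -/
theorem harmonic_degenerate_quotient_point
    {V E G : Type} [Fintype V] [Fintype E] [Group G] [Fintype G]
    [MulAction G V] [MulAction G E] (Γ : Multigraph V E)
    (hcompat : ActsOn G Γ) (hfaith : FaithfulOnComponents G Γ)
    (hharm : HarmonicAction G Γ)
    -- the quotient graph `G\Y` is connected: any two vertices of `Y` are joined by a
    -- chain of edges and orbit-identifications
    (hqconn : ∀ v w : V,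
      Relation.ReflTransGen (fun a b => Γ.Step a b ∨ a ∈ orbit G b) v w)
    -- the quotient morphism is degenerate at `y`: the whole neighborhood `y(1)`
    -- is collapsed to the orbit of `y`
    (y : V) (hdeg : ∀ e : E, y ∈ Γ.ends e → ∀ u ∈ Γ.ends e, u ∈ orbit G y) :
    ∀ v w : V, v ∈ orbit G w := by
  have key : ∀ v : V, v ∈ orbit G y := by
    intro v
    induction hqconn y v with
    | refl => exact mem_orbit_self y
    | tail _ hstep ih =>
      rename_i b c _
      rcases hstep with ⟨e, he⟩ | ⟨k, hk⟩
      · obtain ⟨g, hg⟩ := ih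
        have hends : Γ.ends (g⁻¹ • e) = s(y, g⁻¹ • c) := by
          rw [hcompat g⁻¹ e, he]
          simp only [Sym2.map_pair_eq]
          congr 1
          rw [← hg, inv_smul_smul]
        have hy : y ∈ Γ.ends (g⁻¹ • e) := by rw [hends]; exact Sym2.mem_mk_left _ _
        have hmem : g⁻¹ • c ∈ Γ.ends (g⁻¹ • e) := by
          rw [hends]; exact Sym2.mem_mk_right _ _
        obtain ⟨h, hh⟩ := hdeg (g⁻¹ • e) hy (g⁻¹ • c) hmem
        simp only at hh hg
        exact ⟨g * h, by show (g * h) • y = c; rw [mul_smul, hh, smul_inv_smul]⟩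
      · obtain ⟨g, hg⟩ := ih
        simp only at hg hk
        exact ⟨k⁻¹ * g, by show (k⁻¹ * g) • y = c; rw [mul_smul, hg, ← hk]; exact inv_smul_smul k c⟩
  intro v w
  obtain ⟨g, hg⟩ := key v
  obtain ⟨h, hh⟩ := key w
  simp only at hg hh
  exact ⟨g * h⁻¹, by show (g * h⁻¹) • w = v; rw [mul_smul, ← hh, inv_smul_smul]; exact hg⟩
end

section
/- A faithful group action (G,Y) of a finite group G on a finite graph Y is harmonic if and only if for every vertex y ∈ V(Y), the stabilizer subgroup G_y acts freely on the edge set E(y(1)) of edges incident to y. -/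
open MulAction

open Multigraph

section AuxLemmas
open MulAction
variable {V E G : Type} [Group G] [MulAction G V] [MulAction G E]

private lemma sym2_rep {α : Type*} (z : Sym2 α) : ∃ a b, z = s(a,b) := z.ind fun a b => ⟨a,b,rfl⟩

private lemma card_orbit_inc (Γ : Multigraph V E) (hcompat : ActsOn G Γ)
    (hcrit : HarmonicCrit G Γ) (H : Subgroup G) (y : V) (e1 : E)
    (hnd : ¬ ((Γ.ends e1).map (Quotient.mk (orbitRel H V))).IsDiag)
    (h1 : H) (hy1 : y ∈ Γ.ends ((h1:G) • e1)) :
    Nat.card {e : E // e ∈ orbit H e1 ∧ y ∈ Γ.ends e} =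
      Nat.card {h : H // (h:G) • y = y} := by
  obtain ⟨a, b, hab⟩ := sym2_rep (Γ.ends e1)
  have hnab : a ∉ orbit H b := by
    intro h
    apply hnd
    rw [hab, Sym2.map_pair_eq, Sym2.mk_isDiag_iff]
    exact Quotient.sound h
  have hends : ∀ k : H, Γ.ends ((k:G) • e1) = s((k:G) • a, (k:G) • b) := fun k => by
    rw [hcompat, hab, Sym2.map_pair_eq]
  have key : ∀ k k' : H, y ∈ Γ.ends ((k:G) • e1) → y ∈ Γ.ends ((k':G) • e1) →
      ((k * k'⁻¹ : H):G) • y = y := by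
    intro k k' hk hk'
    rw [hends] at hk hk'
    show ((k:G) * (k':G)⁻¹) • y = y
    rcases Sym2.mem_iff.mp hk with h1 | h1 <;> rcases Sym2.mem_iff.mp hk' with h2 | h2
    · rw [h2, smul_smul, mul_assoc, inv_mul_cancel, mul_one, ← h1, ← h2]
    · refine absurd ⟨k⁻¹ * k', ?_⟩ hnab
      show ((k:G)⁻¹ * (k':G)) • b = a
      rw [mul_smul, ← h2, h1, inv_smul_smul]
    · refine absurd ⟨k'⁻¹ * k, ?_⟩ hnab
      show ((k':G)⁻¹ * (k:G)) • b = a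
      rw [mul_smul, ← h1, h2, inv_smul_smul]
    · rw [h2, smul_smul, mul_assoc, inv_mul_cancel, mul_one, ← h1, ← h2]
  set c : E := (h1:G) • e1 with hc
  have hmemF : ∀ h : {h : H // (h:G) • y = y}, y ∈ Γ.ends (((h:H):G) • c) := by
    rintro ⟨h, hh⟩
    rw [hcompat]
    exact Sym2.mem_map.mpr ⟨y, hy1, hh⟩
  have horbF : ∀ h : {h : H // (h:G) • y = y}, ((h:H):G) • c ∈ orbit H e1 := by
    rintro ⟨h, hh⟩
    refine ⟨h * h1, ?_⟩
    show ((h:G) * (h1:G)) • e1 = (h:G) • c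
    rw [mul_smul, hc]
  let F : {h : H // (h:G) • y = y} → {e : E // e ∈ orbit H e1 ∧ y ∈ Γ.ends e} :=
    fun h => ⟨((h:H):G) • c, horbF h, hmemF h⟩
  have hinj : Function.Injective F := by
    rintro ⟨h, hh⟩ ⟨h', hh'⟩ hFeq
    have heq : (h:G) • c = (h':G) • c := congrArg Subtype.val hFeq
    have hg : ((h':G)⁻¹ * (h:G)) = 1 := by
      refine hcrit _ y c ?_ hy1 ?_
      · rw [mul_smul, hh, inv_smul_eq_iff, hh']
      · rw [mul_smul, heq, inv_smul_smul]
    have : (h':G) = (h:G) := (inv_mul_eq_one.mp hg)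
    exact Subtype.ext (Subtype.ext this.symm)
  have hsurj : Function.Surjective F := by
    rintro ⟨c', ⟨k, hk⟩, hyc⟩
    have hk' : (k:G) • e1 = c' := hk
    have hmem : y ∈ Γ.ends ((k:G) • e1) := by rw [hk']; exact hyc
    refine ⟨⟨k * h1⁻¹, key k h1 hmem hy1⟩, Subtype.ext ?_⟩
    show ((k:G) * (h1:G)⁻¹) • c = c'
    rw [hc, smul_smul, mul_assoc, inv_mul_cancel, mul_one, hk']
  exact (Nat.card_congr (Equiv.ofBijective F ⟨hinj, hsurj⟩)).symm

private lemma fix_all_edges (Γ : Multigraph V E) (hcompat : ActsOn G Γ)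
    (ha : HarmonicAction G Γ) (g : G) (w : V) (d : E)
    (hgw : g • w = w) (hwd : w ∈ Γ.ends d) (hgd : g • d = d)
    (e' : E) (hwe' : w ∈ Γ.ends e') : g • e' = e' := by
  set H := Subgroup.zpowers g with hH
  have hHw : ∀ k : H, (k:G) • w = w := fun k => by
    have h : (k:G) ∈ stabilizer G w :=
      Subgroup.zpowers_le.mpr (mem_stabilizer_iff.mpr hgw) k.2
    exact mem_stabilizer_iff.mp h
  have hHd : ∀ k : H, (k:G) • d = d := fun k => by
    have h : (k:G) ∈ stabilizer G d :=
      Subgroup.zpowers_le.mpr (mem_stabilizer_iff.mpr hgd) k.2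
    exact mem_stabilizer_iff.mp h
  have hnd : ∀ c : E, w ∈ Γ.ends c →
      ¬ ((Γ.ends c).map (Quotient.mk (orbitRel H V))).IsDiag := by
    intro c hwc hdiag
    obtain ⟨a, b, habc⟩ := sym2_rep (Γ.ends c)
    have hab : a ≠ b := by
      have := Γ.loopless c
      rw [habc, Sym2.mk_isDiag_iff] at this
      exact this
    rw [habc, Sym2.map_pair_eq, Sym2.mk_isDiag_iff] at hdiag
    obtain ⟨k, hk⟩ := Quotient.exact hdiag
    have hk' : (k:G) • b = a := hk
    rw [habc, Sym2.mem_iff] at hwc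
    rcases hwc with h | h
    · apply hab
      have hb : b = w := by
        calc b = ((k:G))⁻¹ • ((k:G) • b) := (inv_smul_smul _ _).symm
          _ = ((k:G))⁻¹ • w := by rw [hk', ← h]
          _ = w := hHw k⁻¹
      rw [← h, hb]
    · apply hab
      have ha' : a = w := by rw [← hk', ← h]; exact hHw k
      rw [ha', h]
  have hcards := ha H w d e' (hnd d hwd) (hnd e' hwe')
    ⟨1, by simpa using hwd⟩ ⟨1, by simpa using hwe'⟩
  have hL : Nat.card {c : E // c ∈ orbit H d ∧ w ∈ Γ.ends c} = 1 := by
    have : Unique {c : E // c ∈ orbit H d ∧ w ∈ Γ.ends c} := by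
      refine ⟨⟨⟨d, mem_orbit_self d, hwd⟩⟩, ?_⟩
      rintro ⟨c, ⟨k, rfl⟩, hc⟩
      exact Subtype.ext (hHd k)
    exact Nat.card_unique
  rw [hL] at hcards
  have hsub : Subsingleton {c : E // c ∈ orbit H e' ∧ w ∈ Γ.ends c} :=
    (Nat.card_eq_one_iff_unique.mp hcards.symm).1
  have hmem2 : w ∈ Γ.ends (g • e') := by
    rw [hcompat]
    exact Sym2.mem_map.mpr ⟨w, hwe', hgw⟩
  have h2 : g • e' ∈ orbit H e' := ⟨⟨g, Subgroup.mem_zpowers g⟩, rfl⟩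
  have := hsub.elim (⟨g • e', h2, hmem2⟩ : {c : E // c ∈ orbit H e' ∧ w ∈ Γ.ends c})
    ⟨e', mem_orbit_self e', hwe'⟩
  exact congrArg Subtype.val this

end AuxLemmas

/-- A faithful group action `(G,Y)` on a finite graph is harmonic
(i.e. for every subgroup `H ≤ G` the quotient morphism `Y → H\Y` is harmonic) if
and only if every vertex stabilizer `G_y` acts freely on the edges incident to `y`. -/
theorem harmonicAction_iff_stabilizer_free
    {V E G : Type} [Fintype V] [Fintype E] [Group G] [Fintype G]
    [MulAction G V] [MulAction G E] (Γ : Multigraph V E)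
    (hcompat : ActsOn G Γ) (hfaith : FaithfulOnComponents G Γ) :
    HarmonicAction G Γ ↔ HarmonicCrit G Γ := by
  constructor
  · intro ha g v e hgv hve hge
    have claim : ∀ b, Γ.Reach v b → g • b = b ∧ ∀ e', b ∈ Γ.ends e' → g • e' = e' := by
      intro b hb
      induction hb with
      | refl => exact ⟨hgv, fun e' he' => fix_all_edges Γ hcompat ha g v e hgv hve hge e' he'⟩
      | @tail b' c' hreach hstep ih =>
        obtain ⟨d, hd⟩ := hstep
        have hbd : b' ∈ Γ.ends d := by rw [hd]; exact Sym2.mem_mk_left _ _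
        have hcd : c' ∈ Γ.ends d := by rw [hd]; exact Sym2.mem_mk_right _ _
        have hgd : g • d = d := ih.2 d hbd
        have hne : b' ≠ c' := by
          have := Γ.loopless d
          rw [hd, Sym2.mk_isDiag_iff] at this
          exact this
        have hgc : g • c' = c' := by
          have hmap := hcompat g d
          rw [hgd, hd, Sym2.map_pair_eq, ih.1] at hmap
          rcases Sym2.eq_iff.mp hmap with ⟨-, h⟩ | ⟨h1, h2⟩
          · exact h.symm
          · exact absurd h2.symm hne
        exact ⟨hgc, fun e' he' => fix_all_edges Γ hcompat ha g c' d hgc hcd hgd e' he'⟩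
    refine hfaith v g (by rw [hgv]; exact Relation.ReflTransGen.refl) (fun w hw => (claim w hw).1) (fun e'' he'' => ?_)
    obtain ⟨a, b, hab⟩ := sym2_rep (Γ.ends e'')
    have hva : Γ.Reach v a := he'' a (by rw [hab]; exact Sym2.mem_mk_left _ _)
    exact (claim a hva).2 e'' (by rw [hab]; exact Sym2.mem_mk_left _ _)
  · rintro hcrit H y e1 e2 hnd1 hnd2 ⟨h1, hy1⟩ ⟨h2, hy2⟩
    rw [card_orbit_inc Γ hcompat hcrit H y e1 hnd1 h1 hy1,
        card_orbit_inc Γ hcompat hcrit H y e2 hnd2 h2 hy2]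
end

section
/- Let f : (G,Y) → X be an unflipped harmonic G-cover, x ∈ V(X), w ∈ Y_x, and identify V(Y_x) with G/I_w via g I_w ↦ gw. If δ ∈ G satisfies δ I_w = δ^{-1} I_w (a self-inverse coset) and there is an edge e from w to δw, then δe is a distinct edge from w to δw lying in a different I_w-orbit than e; hence the multiplicity of the self-inverse double coset I_w δ I_w in the edge-labeling multiset at w is even. -/
open MulAction

open Multigraph

theorem even_of_fpf_involutive {α : Type*} [Finite α] {ψ : α → α}
    (h : Function.Involutive ψ) (hf : ∀ a, ψ a ≠ a) : 2 ∣ Nat.card α := by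
  haveI : Fact (Nat.Prime 2) := ⟨Nat.prime_two⟩
  set σ : Equiv.Perm α := h.toPerm ψ with hσ
  have hσ2 : σ ^ 2 = 1 := by
    ext a
    simp [hσ, sq, h a]
  have hG : IsPGroup 2 (Subgroup.zpowers σ) := by
    intro g
    refine ⟨1, ?_⟩
    have hg : (g : Equiv.Perm α) ^ 2 = 1 := by
      obtain ⟨n, hn⟩ := g.2
      rw [← hn, ← zpow_natCast, ← zpow_mul, mul_comm, zpow_mul, zpow_natCast, hσ2, one_zpow]
    ext1
    rw [pow_one]
    push_cast
    simpa using hg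
  have hfix : fixedPoints (Subgroup.zpowers σ) α = ∅ := by
    ext a
    simp only [Set.mem_empty_iff_false, iff_false, mem_fixedPoints]
    intro hall
    exact hf a (hall ⟨σ, Subgroup.mem_zpowers σ⟩)
  have hmod := hG.card_modEq_card_fixedPoints α
  rw [hfix] at hmod
  have : Nat.card (∅ : Set α) = 0 := by simp
  rw [this] at hmod
  exact (Nat.modEq_zero_iff_dvd).1 hmod

/-- Let `f : (G,Y) → X` be an *unflipped* harmonic `G`-cover,
`w` in the fiber over `x` with inertia `I = I_w`.  Suppose `δ ∈ G` represents a
self-inverse coset, `δI = δ⁻¹I` (i.e. `δ•w = δ⁻¹•w`), and `e` is an edge from `w`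
to `δ•w`.  Then `δ•e` is an edge from `w` to `δ•w` distinct from `e` and lying in
a different `I`-orbit; consequently the number of `I`-orbits of edges at `w`
labeled by the self-inverse double coset `IδI` is even. -/
theorem self_inverse_coset_even_multiplicity
    {G VY EY VX EX : Type} [Group G] [Fintype G] [Fintype VY] [Fintype EY]
    [Fintype VX] [Fintype EX] [MulAction G VY] [MulAction G EY]
    (ΓY : Multigraph VY EY) (ΓX : Multigraph VX EX) (f : GraphHom ΓY ΓX)
    (hcov : IsHarmonicGCover G ΓY ΓX f)
    (hunflip : ∀ (g : G) (e : EY), g • e = e → g = 1)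
    (x : VX) (w : VY) (hw : f.fV w = x)
    (δ : G) (hself : δ • w = δ⁻¹ • w)
    (e : EY) (he : ΓY.ends e = s(w, δ • w)) :
    δ • e ≠ e ∧
    ΓY.ends (δ • e) = s(w, δ • w) ∧
    (∀ i : G, i • w = w → i • e ≠ δ • e) ∧
    2 ∣ Nat.card (Quot (fun e1 e2 : {e' : EY // ∃ a, a • w = w ∧ ∃ b, b • w = w ∧
        ΓY.ends e' = s(w, (a * δ * b) • w)} => ∃ i : G, i • w = w ∧ i • e1.1 = e2.1)) := by
  classical
  have hδw : δ • w ≠ w := by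
    intro h
    exact ΓY.loopless e (by rw [he, h]; exact Sym2.mk_isDiag_iff.2 rfl)
  have hδ2 : δ • δ • w = w := by rw [hself, smul_inv_smul]
  have hne : δ • e ≠ e := by
    intro h
    exact hδw (by rw [hunflip δ e h, one_smul])
  have hends : ΓY.ends (δ • e) = s(w, δ • w) := by
    rw [hcov.compat δ e, he, Sym2.map_pair_eq]
    rw [hδ2]
    exact Sym2.eq_swap
  have hdiff : ∀ i : G, i • w = w → i • e ≠ δ • e := by
    intro i hi h
    have h2 : (δ⁻¹ * i) • e = e := by rw [mul_smul, h, inv_smul_smul]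
    have h3 := hunflip _ _ h2
    rw [inv_mul_eq_one] at h3
    exact hδw (by rw [h3]; exact hi)
  refine ⟨hne, hends, hdiff, ?_⟩
  set S := {e' : EY // ∃ a, a • w = w ∧ ∃ b, b • w = w ∧
      ΓY.ends e' = s(w, (a * δ * b) • w)} with hSdef
  set r : S → S → Prop := fun e1 e2 => ∃ i : G, i • w = w ∧ i • e1.1 = e2.1 with hrdef
  have hrequiv : Equivalence r := by
    constructor
    · exact fun s => ⟨1, one_smul _ _, one_smul _ _⟩
    · rintro s t ⟨i, hi, hit⟩
      exact ⟨i⁻¹, by rw [inv_smul_eq_iff, hi], by rw [← hit, inv_smul_smul]⟩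
    · rintro s t u ⟨i, hi, hit⟩ ⟨j, hj, hju⟩
      exact ⟨j * i, by rw [mul_smul, hi, hj], by rw [mul_smul, hit, hju]⟩
  have hloopless : ∀ (g : G) (e' : EY), ΓY.ends e' = s(w, g • w) → g • w ≠ w := by
    intro g e' h hg
    exact ΓY.loopless e' (by rw [h, hg]; exact Sym2.mk_isDiag_iff.2 rfl)
  have hIδI_inv : ∀ g : G, (∃ a, a • w = w ∧ ∃ b, b • w = w ∧ g = a * δ * b) →
      ∃ a, a • w = w ∧ ∃ b, b • w = w ∧ g⁻¹ = a * δ * b := by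
    rintro g ⟨a, ha, b, hb, hg⟩
    have ha' : a⁻¹ • w = w := by rw [inv_smul_eq_iff, ha]
    refine ⟨b⁻¹, by rw [inv_smul_eq_iff, hb], δ⁻¹ * δ⁻¹ * a⁻¹, ?_, by rw [hg]; group⟩
    rw [mul_smul, mul_smul, ha', ← hself, inv_smul_smul]
  have hP : ∀ s : S, ∃ g : G,
      (∃ a, a • w = w ∧ ∃ b, b • w = w ∧ g = a * δ * b) ∧ ΓY.ends s.1 = s(w, g • w) := by
    rintro ⟨e', a, ha, b, hb, hend⟩
    exact ⟨a * δ * b, ⟨a, ha, b, hb, rfl⟩, hend⟩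
  choose gf hgf1 hgf2 using hP
  have hgfw : ∀ s : S, gf s • w ≠ w := fun s => hloopless _ _ (hgf2 s)
  have hkey : ∀ (s : S) (g : G), ΓY.ends s.1 = s(w, g • w) → gf s • w = g • w := by
    intro s g h
    have h2 := (hgf2 s).symm.trans h
    rw [Sym2.eq_iff] at h2
    rcases h2 with ⟨-, h2⟩ | ⟨h2, h3⟩
    · exact h2
    · exact absurd h3 (hgfw s)
  have hψend : ∀ s : S, ΓY.ends ((gf s)⁻¹ • s.1) = s(w, (gf s)⁻¹ • w) := by
    intro s
    rw [hcov.compat, hgf2 s, Sym2.map_pair_eq, inv_smul_smul]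
    exact Sym2.eq_swap
  set ψ₀ : S → S := fun s => ⟨(gf s)⁻¹ • s.1, by
    obtain ⟨a, ha, b, hb, hab⟩ := hIδI_inv (gf s) (hgf1 s)
    exact ⟨a, ha, b, hb, by rw [hψend s, hab]⟩⟩ with hψ₀
  have hval : ∀ s : S, (ψ₀ s).1 = (gf s)⁻¹ • s.1 := fun s => rfl
  have wd : ∀ s t : S, r s t → Quot.mk r (ψ₀ s) = Quot.mk r (ψ₀ t) := by
    rintro s t ⟨i, hi, hit⟩
    apply Quot.sound
    have hend : ΓY.ends t.1 = s(w, (i * gf s) • w) := by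
      rw [← hit, hcov.compat, hgf2 s, Sym2.map_pair_eq, hi, mul_smul]
    have h2 : gf t • w = (i * gf s) • w := hkey t _ hend
    refine ⟨(gf t)⁻¹ * i * gf s, ?_, ?_⟩
    · rw [mul_assoc, mul_smul, ← h2, inv_smul_smul]
    · rw [hval, hval, ← hit, smul_smul, smul_smul, mul_inv_cancel_right]
  have key2 : ∀ s : S, r (ψ₀ (ψ₀ s)) s := by
    intro s
    have h2 : gf (ψ₀ s) • w = (gf s)⁻¹ • w := hkey (ψ₀ s) _ (hψend s)
    refine ⟨gf s * gf (ψ₀ s), by rw [mul_smul, h2, smul_inv_smul], ?_⟩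
    rw [hval, hval, smul_smul, smul_smul, mul_inv_cancel_right, mul_inv_cancel, one_smul]
  have hinv : Function.Involutive (Quot.lift (fun s => Quot.mk r (ψ₀ s)) wd) := by
    intro q
    induction q using Quot.ind with
    | _ s => exact Quot.sound (key2 s)
  have hfpf : ∀ q, Quot.lift (fun s => Quot.mk r (ψ₀ s)) wd q ≠ q := by
    intro q
    induction q using Quot.ind with
    | _ s =>
      intro hq
      have hq' : Quot.mk r (ψ₀ s) = Quot.mk r s := hq
      obtain ⟨i, hi, his⟩ := hrequiv.eqvGen_iff.1 (Quot.eqvGen_exact hq')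
      rw [hval, smul_smul] at his
      have h3 := hunflip _ _ his
      rw [mul_inv_eq_one] at h3
      exact hgfw s (by rw [← h3]; exact hi)
  exact even_of_fpf_involutive hinv hfpf
end

section
/- Let X be a finite connected graph of genus g (first Betti number), T ⊆ X a spanning tree, and G a finite group. Suppose elements γ₁,…,γ_g ∈ G are assigned to the g edges of X not in T, and each vertex z of X is assigned a finite symmetric multiset S_z of nontrivial elements of G. If G is generated by {γ₁,…,γ_g} together with ∪_z S_z, then the associated graph Y — with vertex set G × V(X), horizontal edges (g,z)—(g,z') for tree edges zz' ∈ T, edges (g,z)—(gγ_i, z') for each non-tree edge zz' with label γ_i, and vertical fiber edges making each fiber G×{z} into Cay(G,S_z) — is connected, and the left G-action on the first coordinate is a harmonic action with quotient isomorphic to X and trivial vertex stabilizers (an étale G-cover). -/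
open MulAction

open Multigraph

namespace Stmt19

variable {G VX EX : Type} [Group G] {ι : VX → Type}

/-- vertices of the cover: `G × V(X)` -/
structure CovV (G VX : Type) where
  g : G
  base : VX

/-- horizontal edges of the cover: `G × E(X)` -/
structure CovHE (G EX : Type) where
  g : G
  edge : EX

instance : MulAction G (CovV G VX) where
  smul a p := ⟨a * p.g, p.base⟩
  one_smul p := by
    show (⟨1 * p.g, p.base⟩ : CovV G VX) = p
    rw [one_mul]
  mul_smul a b p := by
    show (⟨a * b * p.g, p.base⟩ : CovV G VX) = ⟨a * (b * p.g), p.base⟩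
    rw [mul_assoc]

instance : MulAction G (CovHE G EX) where
  smul a p := ⟨a * p.g, p.edge⟩
  one_smul p := by
    show (⟨1 * p.g, p.edge⟩ : CovHE G EX) = p
    rw [one_mul]
  mul_smul a b p := by
    show (⟨a * b * p.g, p.edge⟩ : CovHE G EX) = ⟨a * (b * p.g), p.edge⟩
    rw [mul_assoc]

instance sigmaMulAction (sf : ∀ z : VX, ι z → G) (invf : ∀ z : VX, ι z → ι z) :
    MulAction G (Σ z : VX, CayE (sf z) (invf z)) where
  smul a p := ⟨p.1, a • p.2⟩
  one_smul p := by
    show (⟨p.1, (1 : G) • p.2⟩ : Σ z : VX, CayE (sf z) (invf z)) = p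
    rw [one_smul]
  mul_smul a b p := by
    show (⟨p.1, (a * b) • p.2⟩ : Σ z : VX, CayE (sf z) (invf z))
        = ⟨p.1, a • (b • p.2)⟩
    rw [mul_smul]

instance sumMulAction {α β : Type} [MulAction G α] [MulAction G β] :
    MulAction G (α ⊕ β) where
  smul a := Sum.map (a • ·) (a • ·)
  one_smul p := by cases p <;> simp [Sum.map]
  mul_smul a b p := by cases p <;> simp [Sum.map, mul_smul]

/-- The Grunwald–Wang cover graph: vertex set `G × V(X)`; a horizontal edge
`(g,e)` joins `(g, src e)` to `(g·γ(e), tgt e)` (so tree edges, where `γ = 1`,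
stay within one copy of `X`, and a non-tree edge twists by its monodromy label);
the fiber over each vertex `z` is the Cayley graph `Cay(G, S_z)`. -/
def gwGraph (ΓX : Multigraph VX EX) (o : EX → VX × VX)
    (hor : ∀ e, ΓX.ends e = s((o e).1, (o e).2))
    (γ : EX → G) (sf : ∀ z : VX, ι z → G) (invf : ∀ z : VX, ι z → ι z)
    (hinvf : ∀ z i, sf z (invf z i) = (sf z i)⁻¹)
    (hnef : ∀ z i, sf z i ≠ 1) :
    Multigraph (CovV G VX) (CovHE G EX ⊕ Σ z : VX, CayE (sf z) (invf z)) where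
  ends := fun e =>
    match e with
    | Sum.inl h => s((⟨h.g, (o h.edge).1⟩ : CovV G VX),
        (⟨h.g * γ h.edge, (o h.edge).2⟩ : CovV G VX))
    | Sum.inr c =>
        ((Cay (sf c.1) (invf c.1) (hinvf c.1) (hnef c.1)).ends c.2).map
          (fun a => ⟨a, c.1⟩)
  loopless := by
    rintro (h | c)
    · intro hd
      apply ΓX.loopless h.edge
      rw [hor h.edge, Sym2.mk_isDiag_iff]
      exact congrArg CovV.base (Sym2.mk_isDiag_iff.mp hd)
    · intro hd
      exact (Cay (sf c.1) (invf c.1) (hinvf c.1) (hnef c.1)).loopless c.2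
        ((Sym2.isDiag_map_iff' (f := fun a => (⟨a, c.1⟩ : CovV G VX))
          (fun a b hab => congrArg CovV.g hab) _).mp hd)

section Aux

set_option linter.unusedSectionVars false

variable [Fintype G] [Fintype VX] [Fintype EX] [∀ z, Fintype (ι z)]
    (ΓX : Multigraph VX EX)
    (o : EX → VX × VX) (hor : ∀ e, ΓX.ends e = s((o e).1, (o e).2))
    (γ : EX → G) (sf : ∀ z : VX, ι z → G) (invf : ∀ z : VX, ι z → ι z)
    (hinvf : ∀ z i, sf z (invf z i) = (sf z i)⁻¹)
    (hnef : ∀ z i, sf z i ≠ 1)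

@[simp] lemma smul_covv (a b : G) (z : VX) :
    a • (⟨b, z⟩ : CovV G VX) = ⟨a * b, z⟩ := rfl

lemma gw_smul_inl (a : G) (h : CovHE G EX) :
    a • (Sum.inl h : CovHE G EX ⊕ Σ z : VX, CayE (sf z) (invf z)) =
      Sum.inl ⟨a * h.g, h.edge⟩ := rfl

lemma gw_smul_inr (a : G) (z : VX) (p : G × ι z) :
    a • (Sum.inr ⟨z, Quot.mk _ p⟩ : CovHE G EX ⊕ Σ z : VX, CayE (sf z) (invf z)) =
      Sum.inr ⟨z, Quot.mk _ (a * p.1, p.2)⟩ := rfl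

lemma gw_ends_inl (h : CovHE G EX) :
    (gwGraph ΓX o hor γ sf invf hinvf hnef).ends (Sum.inl h) =
      s((⟨h.g, (o h.edge).1⟩ : CovV G VX),
        (⟨h.g * γ h.edge, (o h.edge).2⟩ : CovV G VX)) := rfl

lemma gw_ends_inr (z : VX) (p : G × ι z) :
    (gwGraph ΓX o hor γ sf invf hinvf hnef).ends (Sum.inr ⟨z, Quot.mk _ p⟩) =
      s((⟨p.1, z⟩ : CovV G VX), (⟨p.1 * sf z p.2, z⟩ : CovV G VX)) := by
  unfold gwGraph
  simp only [Cay]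
  rw [Sym2.map_pair_eq]

lemma gw_actsOn : ActsOn G (gwGraph ΓX o hor γ sf invf hinvf hnef) := by
  rintro a (h | ⟨z, ce⟩)
  · erw [gw_smul_inl, gw_ends_inl, gw_ends_inl, Sym2.map_pair_eq, smul_covv, smul_covv,
      mul_assoc]
  · induction ce using Quot.ind with
    | _ p =>
      erw [gw_smul_inr, gw_ends_inr, gw_ends_inr, Sym2.map_pair_eq, smul_covv, smul_covv,
        mul_assoc]

lemma gw_step_symm {p q : CovV G VX}
    (h : (gwGraph ΓX o hor γ sf invf hinvf hnef).Step p q) :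
    (gwGraph ΓX o hor γ sf invf hinvf hnef).Step q p := by
  obtain ⟨e, he⟩ := h
  exact ⟨e, he.trans Sym2.eq_swap⟩

lemma gw_reach_symm {p q : CovV G VX}
    (h : (gwGraph ΓX o hor γ sf invf hinvf hnef).Reach p q) :
    (gwGraph ΓX o hor γ sf invf hinvf hnef).Reach q p :=
  (@Relation.ReflTransGen.symmetric _ _
    ⟨fun _ _ => gw_step_symm ΓX o hor γ sf invf hinvf hnef⟩).symm _ _ h

lemma gw_reach_smul (a : G) {p q : CovV G VX}
    (h : (gwGraph ΓX o hor γ sf invf hinvf hnef).Reach p q) :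
    (gwGraph ΓX o hor γ sf invf hinvf hnef).Reach (a • p) (a • q) := by
  refine Relation.ReflTransGen.lift (a • ·) ?_ _ _ h
  rintro x y ⟨e, he⟩
  exact ⟨a • e, by
    erw [gw_actsOn ΓX o hor γ sf invf hinvf hnef a e, he, Sym2.map_pair_eq]⟩

variable (T : Set EX) (hγT : ∀ e ∈ T, γ e = 1)

include hγT in
lemma gw_tree_reach (g : G) {a b : VX} (h : ΓX.ReachIn T a b) :
    (gwGraph ΓX o hor γ sf invf hinvf hnef).Reach ⟨g, a⟩ ⟨g, b⟩ := by
  induction h with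
  | refl => exact .refl
  | tail _ hs ih =>
    rename_i b c _
    obtain ⟨e, heT, he⟩ := hs
    have horbc := (hor e).symm.trans he
    have hstep : (gwGraph ΓX o hor γ sf invf hinvf hnef).Step ⟨g, b⟩ ⟨g, c⟩ := by
      rcases Sym2.eq_iff.mp horbc with ⟨h1, h2⟩ | ⟨h1, h2⟩
      · exact ⟨Sum.inl ⟨g, e⟩, by
          rw [gw_ends_inl, hγT e heT, mul_one, h1, h2]⟩
      · exact ⟨Sum.inl ⟨g, e⟩, by
          rw [gw_ends_inl, hγT e heT, mul_one, h1, h2]; exact Sym2.eq_swap⟩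
    exact ih.tail hstep

include hγT in
lemma gw_key (hT : ΓX.IsSpanningTree T)
    (hgen : Subgroup.closure
      ((γ '' {e : EX | e ∉ T}) ∪ ⋃ z : VX, Set.range (sf z)) = ⊤)
    (z₀ : VX) (h : G) :
    (gwGraph ΓX o hor γ sf invf hinvf hnef).Reach ⟨1, z₀⟩ ⟨h, z₀⟩ := by
  have hmem : h ∈ Subgroup.closure
      ((γ '' {e : EX | e ∉ T}) ∪ ⋃ z : VX, Set.range (sf z)) := by
    rw [hgen]; trivial
  induction hmem using Subgroup.closure_induction with
  | mem x hx =>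
    rcases hx with ⟨e, -, rfl⟩ | hx
    · refine (gw_tree_reach ΓX o hor γ sf invf hinvf hnef T hγT 1
        (hT.1 z₀ (o e).1)).trans (Relation.ReflTransGen.single ?_ |>.trans
        (gw_tree_reach ΓX o hor γ sf invf hinvf hnef T hγT (γ e) (hT.1 (o e).2 z₀)))
      exact ⟨Sum.inl ⟨1, e⟩, by rw [gw_ends_inl, one_mul]⟩
    · simp only [Set.mem_iUnion, Set.mem_range] at hx
      obtain ⟨z, i, rfl⟩ := hx
      refine (gw_tree_reach ΓX o hor γ sf invf hinvf hnef T hγT 1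
        (hT.1 z₀ z)).trans (Relation.ReflTransGen.single ?_ |>.trans
        (gw_tree_reach ΓX o hor γ sf invf hinvf hnef T hγT (sf z i) (hT.1 z z₀)))
      exact ⟨Sum.inr ⟨z, Quot.mk _ (1, i)⟩, by rw [gw_ends_inr, one_mul]⟩
  | one => exact .refl
  | mul a b _ _ iha ihb =>
    refine iha.trans ?_
    have := gw_reach_smul ΓX o hor γ sf invf hinvf hnef a ihb
    simp at this; exact this
  | inv a _ iha =>
    apply gw_reach_symm
    have := gw_reach_smul ΓX o hor γ sf invf hinvf hnef a⁻¹ iha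
    simpa using this

end Aux

/-- Let `X` be a finite connected graph with spanning tree `T`,
`γ` an assignment of elements of `G` to the edges of `X` that is trivial on tree
edges, and `S_z` a finite symmetric multiset of nontrivial elements of `G` for
each vertex `z`.  If `G` is generated by the labels `γ` of the non-tree edges
together with `⋃_z S_z`, then the associated graph `Y` (with vertex set
`G × V(X)`, horizontal edges twisted by `γ`, and fiber `Cay(G,S_z)` over `z`) is
connected, the left `G`-action on the first coordinate preserves incidence, has
trivial vertex stabilizers (hence is harmonic and étale), and the quotient is
isomorphic to `X` (vertex orbits are the fibers of the projection, and orbits of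
horizontal edges correspond to the edges of `X`). -/
theorem gw_cover_connected_etale
    [Fintype G] [Fintype VX] [Fintype EX] [∀ z, Fintype (ι z)]
    (ΓX : Multigraph VX EX) (hXconn : ΓX.Connected)
    (o : EX → VX × VX) (hor : ∀ e, ΓX.ends e = s((o e).1, (o e).2))
    (T : Set EX) (hT : ΓX.IsSpanningTree T)
    (γ : EX → G) (hγT : ∀ e ∈ T, γ e = 1)
    (sf : ∀ z : VX, ι z → G) (invf : ∀ z : VX, ι z → ι z)
    (hinvf : ∀ z i, sf z (invf z i) = (sf z i)⁻¹)
    (hinvf2 : ∀ z i, invf z (invf z i) = i)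
    (hnef : ∀ z i, sf z i ≠ 1)
    (hgen : Subgroup.closure
      ((γ '' {e : EX | e ∉ T}) ∪ ⋃ z : VX, Set.range (sf z)) = ⊤) :
    (gwGraph ΓX o hor γ sf invf hinvf hnef).Connected ∧
    ActsOn G (gwGraph ΓX o hor γ sf invf hinvf hnef) ∧
    (∀ (g : G) (p : CovV G VX), g • p = p → g = 1) ∧
    (∀ p q : CovV G VX, q ∈ MulAction.orbit G p ↔ p.base = q.base) ∧
    (∀ h h' : CovHE G EX,
      (Sum.inl h' : CovHE G EX ⊕ Σ z : VX, CayE (sf z) (invf z)) ∈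
          MulAction.orbit G
            (Sum.inl h : CovHE G EX ⊕ Σ z : VX, CayE (sf z) (invf z)) ↔
        h.edge = h'.edge) := by
  refine ⟨?_, gw_actsOn ΓX o hor γ sf invf hinvf hnef, ?_, ?_, ?_⟩
  · intro p q
    have h1 : (gwGraph ΓX o hor γ sf invf hinvf hnef).Reach
        ⟨p.g, p.base⟩ ⟨p.g * (p.g⁻¹ * q.g), p.base⟩ := by
      have := gw_reach_smul ΓX o hor γ sf invf hinvf hnef p.g
        (gw_key ΓX o hor γ sf invf hinvf hnef T hγT hT hgen p.base (p.g⁻¹ * q.g))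
      simpa using this
    have h2 : (gwGraph ΓX o hor γ sf invf hinvf hnef).Reach
        ⟨q.g, p.base⟩ ⟨q.g, q.base⟩ :=
      gw_tree_reach ΓX o hor γ sf invf hinvf hnef T hγT q.g (hT.1 p.base q.base)
    rw [mul_inv_cancel_left] at h1
    exact h1.trans h2
  · intro g p hgp
    have : g * p.g = p.g := congrArg CovV.g hgp
    exact mul_eq_right.mp this
  · intro p q
    constructor
    · rintro ⟨g, rfl⟩
      rfl
    · intro hbase
      refine ⟨q.g * p.g⁻¹, ?_⟩
      show (⟨q.g * p.g⁻¹ * p.g, p.base⟩ : CovV G VX) = q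
      rw [inv_mul_cancel_right, hbase]
  · intro h h'
    constructor
    · rintro ⟨g, hg⟩
      have h2 : (Sum.inl (⟨g * h.g, h.edge⟩ : CovHE G EX) :
          CovHE G EX ⊕ Σ z : VX, CayE (sf z) (invf z)) = Sum.inl h' := hg
      obtain rfl := Sum.inl.inj h2
      rfl
    · intro hedge
      refine ⟨h'.g * h.g⁻¹, ?_⟩
      show (Sum.inl (⟨h'.g * h.g⁻¹ * h.g, h.edge⟩ : CovHE G EX) :
          CovHE G EX ⊕ Σ z : VX, CayE (sf z) (invf z)) = Sum.inl h'
      rw [inv_mul_cancel_right, hedge]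

end Stmt19
end
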